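/- A BST-conjunction with n distinct variables is satisfiable if and only if it is satisfied by every partition of size 2^n − 1. -/

import Mathlib

namespace BSTO

/-- The unordered Cartesian product `s ⊗ t = {{u,v} | u ∈ s, v ∈ t}`, as a class of ZFC sets. -/
def uprod (s t : ZFSet) : Set ZFSet := {w | ∃ u ∈ s, ∃ v ∈ t, w = ({u, v} : ZFSet)}

/-- A partition: a collection of pairwise disjoint nonempty sets. -/
def IsPartition (S : ZFSet) : Prop :=
  (∀ b, b ∈ S → b ≠ (∅ : ZFSet)) ∧
    ∀ b, b ∈ S → ∀ c, c ∈ S → b ≠ c → ∀ t, t ∈ b → t ∉ c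

/-- `Pow*₁,₂ B`: members of the intersecting power set of `B` of cardinality 1 or 2. -/
def powAst12 (B : ZFSet) : Set ZFSet :=
  {t | t ⊆ ZFSet.sUnion B ∧ (∀ s, s ∈ B → ∃ u, u ∈ t ∧ u ∈ s) ∧ ∃ u v : ZFSet, t = {u, v}}

/-- BST⊗-formulae. -/
inductive Fmla (V : Type) : Type
  | eqUnion (x y z : V)
  | eqInter (x y z : V)
  | eqDiff  (x y z : V)
  | eqUprod (x y z : V)
  | subset  (x y : V)
  | not (φ : Fmla V)
  | and (φ ψ : Fmla V)
  | or (φ ψ : Fmla V)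

def Fmla.Sat {V : Type} (M : V → ZFSet) : Fmla V → Prop
  | .eqUnion x y z => M x = M y ∪ M z
  | .eqInter x y z => M x = M y ∩ M z
  | .eqDiff x y z  => M x = M y \ M z
  | .eqUprod x y z => (M x).toSet = uprod (M y) (M z)
  | .subset x y    => M x ⊆ M y
  | .not φ         => ¬ Fmla.Sat M φ
  | .and φ ψ       => Fmla.Sat M φ ∧ Fmla.Sat M ψ
  | .or φ ψ        => Fmla.Sat M φ ∨ Fmla.Sat M ψ

/-- A partition `S` satisfies `φ` if the set assignment induced by some
partition assignment `J` (mapping variables to sets of blocks) models `φ`. -/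
def SatByPartition {V : Type} (S : ZFSet) (φ : Fmla V) : Prop :=
  ∃ J : V → ZFSet, (∀ v, J v ⊆ S) ∧ Fmla.Sat (fun v => ZFSet.sUnion (J v)) φ

/-- BST literals. -/
inductive BSTLit (V : Type) : Type
  | eqUnion (x y z : V)
  | eqDiff  (x y z : V)
  | ne (x y : V)

def BSTLit.Sat {V : Type} (M : V → ZFSet) : BSTLit V → Prop
  | .eqUnion x y z => M x = M y ∪ M z
  | .eqDiff x y z  => M x = M y \ M z
  | .ne x y        => M x ≠ M y

/-- A map `F : V → pow(pow⁺ V)` fulfills a BST literal. -/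
def BSTLit.FulfilledBy {V : Type} (F : V → Set (Set V)) : BSTLit V → Prop
  | .eqUnion x y z => F x = F y ∪ F z
  | .eqDiff x y z  => F x = F y \ F z
  | .ne x y        => F x ≠ F y

/-- BST⊗ literals. -/
inductive Lit (V : Type) : Type
  | eqUnion (x y z : V)
  | eqDiff  (x y z : V)
  | eqUprod (x y z : V)
  | ne (x y : V)

def Lit.Sat {V : Type} (M : V → ZFSet) : Lit V → Prop
  | .eqUnion x y z => M x = M y ∪ M z
  | .eqDiff x y z  => M x = M y \ M z
  | .eqUprod x y z => (M x).toSet = uprod (M y) (M z)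
  | .ne x y        => M x ≠ M y

/-- The nodes over a set of places: nonempty subsets of cardinality at most 2. -/
def NodesOf (P : Type) : Set (Set P) := {A | ∃ p q : P, A = {p, q}}

/-- Unordered product of two sets of places: the set of nodes `{u,v}`, `u ∈ s`, `v ∈ t`. -/
def setUprod {P : Type} (s t : Set P) : Set (Set P) := {A | ∃ u ∈ s, ∃ v ∈ t, A = {u, v}}

/-- Accessibility of a place from the source places, w.r.t. a target map `T`. -/
inductive Accessible {P : Type} (T : Set P → Set P) : P → Prop
  | source (p : P) (h : ∀ A ∈ NodesOf P, p ∉ T A) : Accessible T p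
  | step (p : P) (A : Set P) (hA : A ∈ NodesOf P)
      (hacc : ∀ q ∈ A, Accessible T q) (hp : p ∈ T A) : Accessible T p

/-- Conditions (a), (b), (c1)-(c3) for a literal, w.r.t. a ⊗-graph with target map `T`
and a candidate fulfilling map `F`. -/
def Lit.GraphFulfilled {P V : Type} (T : Set P → Set P) (F : V → Set P) : Lit V → Prop
  | .eqUnion x y z => F x = F y ∪ F z
  | .eqDiff x y z  => F x = F y \ F z
  | .ne x y        => F x ≠ F y
  | .eqUprod x y z =>
      (∀ υ ∈ F y, ∀ ζ ∈ F z, (T {υ, ζ}).Nonempty ∧ T {υ, ζ} ⊆ F x) ∧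
      F x ⊆ (⋃ A ∈ setUprod (F y) (F z), T A) ∧
      (⋃ A ∈ NodesOf P \ setUprod (F y) (F z), T A) ∩ F x = ∅

/-- A ⊗-graph (given by its target map `T`) fulfills the conjunction `Φ` via `F`. -/
def Fulfills {P V : Type} (T : Set P → Set P) (F : V → Set P) (Φ : List (Lit V)) : Prop :=
  ∀ l ∈ Φ, Lit.GraphFulfilled T F l

/-- `S'` is a ⊗-subpartition of the partition `S`. -/
def OSubpart (S : ZFSet) (S' : Set ZFSet) : Prop :=
  S' ⊆ S.toSet ∧ ∃ B : Set ZFSet,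
    (∀ b ∈ B, ∃ p, p ∈ S ∧ ∃ q, q ∈ S ∧ b = ({p, q} : ZFSet)) ∧
    (⋃ c ∈ S', c.toSet) = ⋃ b ∈ B, powAst12 b

/-- `Σ_⊗`: the maximal ⊗-subpartition of `S` (the union of all ⊗-subpartitions). -/
def sigmaOtimes (S : ZFSet) : Set ZFSet := {b | ∃ S', OSubpart S S' ∧ b ∈ S'}

/-- The target map of the ⊗-graph induced by a partition `S` via the bijection `e`,
relative to the set `Pi` of ⊗-upblocks. -/
def inducedT (S : ZFSet) {P : Type} (e : P ≃ S.toSet) (Pi : Set ZFSet) (A : Set P) :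
    Set P :=
  {q | ∃ p₁ p₂ : P, A = {p₁, p₂} ∧ ({(e p₁ : ZFSet), (e p₂ : ZFSet)} : ZFSet) ∈ Pi ∧
    (e q : ZFSet) ∈ sigmaOtimes S ∧
    ((e q : ZFSet).toSet ∩ powAst12 ({(e p₁ : ZFSet), (e p₂ : ZFSet)} : ZFSet)).Nonempty}

/-- `m` is the maximum of `Sp` w.r.t. the strict order `r`. -/
def IsMaxIn {P : Type} (r : P → P → Prop) (Sp : Set P) (m : P) : Prop :=
  m ∈ Sp ∧ ∀ p ∈ Sp, p = m ∨ r p m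

/-- `r` is a topological ⊗-order for the ⊗-graph with target map `T`:
a strict total order on places with `max A ≺ max T(A)` for every ⊗-node `A`. -/
def IsTopOOrder {P : Type} (T : Set P → Set P) (r : P → P → Prop) : Prop :=
  (∀ a, ¬ r a a) ∧ (∀ a b c, r a b → r b c → r a c) ∧ (∀ a b, a ≠ b → r a b ∨ r b a) ∧
  ∀ A ∈ NodesOf P, (T A).Nonempty →
    ∃ m m', IsMaxIn r A m ∧ IsMaxIn r (T A) m' ∧ r m m'

/-- Hereditarily finite ZFC sets. -/
inductive IsHF : ZFSet → Prop
  | mk (x : ZFSet) (hfin : x.toSet.Finite) (hmem : ∀ y ∈ x, IsHF y) : IsHF x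

/-! ### Auxiliary material for Statement 5 -/

private def natToZF : ℕ → ZFSet.{u}
  | 0 => ∅
  | n + 1 => insert (natToZF n) (natToZF n)

private lemma natToZF_mem {m k : ℕ} (h : m < k) : natToZF m ∈ natToZF k := by
  induction k with
  | zero => omega
  | succ j ih =>
    rcases Nat.lt_succ_iff_lt_or_eq.mp h with h' | h'
    · exact ZFSet.mem_insert_of_mem _ (ih h')
    · subst h'; exact ZFSet.mem_insert _ _

private lemma natToZF_inj : Function.Injective natToZF := by
  intro m k h
  by_contra hne
  rcases Nat.lt_or_ge m k with hl | hl
  · exact ZFSet.mem_irrefl _ (h ▸ natToZF_mem hl)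
  · have hl' : k < m := lt_of_le_of_ne hl (Ne.symm hne)
    exact ZFSet.mem_irrefl _ (h ▸ natToZF_mem hl')

private def listToZF : List ZFSet.{u} → ZFSet.{u}
  | [] => ∅
  | a :: l => insert a (listToZF l)

private lemma mem_listToZF {x : ZFSet} : ∀ {l : List ZFSet}, x ∈ listToZF l ↔ x ∈ l
  | [] => by simp [listToZF]
  | a :: l => by
    simp [listToZF, ZFSet.mem_insert_iff, mem_listToZF (l := l)]

/-- In a partition, sets of blocks with equal unions are equal. -/
private lemma sUnion_inj_of_partition {S A B : ZFSet} (hS : IsPartition S)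
    (hA : A ⊆ S) (hB : B ⊆ S) (h : ZFSet.sUnion A = ZFSet.sUnion B) : A = B := by
  have key : ∀ A B : ZFSet, A ⊆ S → B ⊆ S →
      ZFSet.sUnion A = ZFSet.sUnion B → ∀ b, b ∈ A → b ∈ B := by
    intro A B hA hB h b hb
    have hbS : b ∈ S := hA hb
    have hbne : b ≠ ∅ := hS.1 b hbS
    have : ∃ t, t ∈ b := by
      by_contra hc
      push_neg at hc
      exact hbne (ZFSet.eq_empty b |>.mpr hc)
    obtain ⟨t, ht⟩ := this
    have htA : t ∈ ZFSet.sUnion A := ZFSet.mem_sUnion.mpr ⟨b, hb, ht⟩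
    rw [h] at htA
    obtain ⟨c, hcB, htc⟩ := ZFSet.mem_sUnion.mp htA
    have : b = c := by
      by_contra hbc
      exact hS.2 b hbS c (hB hcB) hbc t ht htc
    rwa [this]
  exact ZFSet.ext fun b => ⟨key A B hA hB h b, key B A hB hA h.symm b⟩

private lemma sUnion_union (A B : ZFSet) :
    ZFSet.sUnion (A ∪ B) = ZFSet.sUnion A ∪ ZFSet.sUnion B := by
  apply ZFSet.ext
  intro t
  simp only [ZFSet.mem_sUnion, ZFSet.mem_union]
  constructor
  · rintro ⟨c, hc | hc, htc⟩
    · exact Or.inl ⟨c, hc, htc⟩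
    · exact Or.inr ⟨c, hc, htc⟩
  · rintro (⟨c, hc, htc⟩ | ⟨c, hc, htc⟩)
    · exact ⟨c, Or.inl hc, htc⟩
    · exact ⟨c, Or.inr hc, htc⟩

private lemma sUnion_diff_of_partition {S A B : ZFSet} (hS : IsPartition S)
    (hA : A ⊆ S) (hB : B ⊆ S) :
    ZFSet.sUnion (A \ B) = ZFSet.sUnion A \ ZFSet.sUnion B := by
  apply ZFSet.ext
  intro t
  simp only [ZFSet.mem_sUnion, ZFSet.mem_sdiff]
  constructor
  · rintro ⟨c, hc, htc⟩
    obtain ⟨hcA, hcB⟩ := hc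
    refine ⟨⟨c, hcA, htc⟩, ?_⟩
    rintro ⟨d, hdB, htd⟩
    have hcd : c = d := by
      by_contra hne
      exact hS.2 c (hA hcA) d (hB hdB) hne t htc htd
    exact hcB (hcd ▸ hdB)
  · rintro ⟨⟨c, hcA, htc⟩, hnB⟩
    refine ⟨c, ⟨hcA, fun hcB => hnB ⟨c, hcB, htc⟩⟩, htc⟩

/-- The canonical fulfilling map induced by a set assignment: `v` maps to the set of
nonempty "Venn regions" (recorded as subsets of the variables) that lie inside `M v`. -/
private def mkF {n : ℕ} (M : Fin n → ZFSet) : Fin n → Set (Set (Fin n)) :=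
  fun v => {σ | v ∈ σ ∧ ∃ t : ZFSet, ∀ w, t ∈ M w ↔ w ∈ σ}

private lemma mkF_nonempty {n : ℕ} {M : Fin n → ZFSet} {v : Fin n} {σ : Set (Fin n)}
    (h : σ ∈ mkF M v) : σ.Nonempty := ⟨v, h.1⟩

private lemma mkF_fulfills {n : ℕ} {M : Fin n → ZFSet} {l : BSTLit (Fin n)}
    (hMl : BSTLit.Sat M l) : BSTLit.FulfilledBy (mkF M) l := by
  cases l with
  | eqUnion x y z =>
    have hMx : M x = M y ∪ M z := hMl
    show mkF M x = mkF M y ∪ mkF M z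
    apply Set.ext
    intro σ
    simp only [mkF, Set.mem_setOf_eq, Set.mem_union]
    constructor
    · rintro ⟨hx, t, ht⟩
      have : t ∈ M y ∨ t ∈ M z := ZFSet.mem_union.mp (hMx ▸ (ht x).mpr hx)
      rcases this with h | h
      · exact Or.inl ⟨(ht y).mp h, t, ht⟩
      · exact Or.inr ⟨(ht z).mp h, t, ht⟩
    · rintro (⟨hy, t, ht⟩ | ⟨hz, t, ht⟩)
      · refine ⟨(ht x).mp ?_, t, ht⟩
        rw [hMx]; exact ZFSet.mem_union.mpr (Or.inl ((ht y).mpr hy))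
      · refine ⟨(ht x).mp ?_, t, ht⟩
        rw [hMx]; exact ZFSet.mem_union.mpr (Or.inr ((ht z).mpr hz))
  | eqDiff x y z =>
    have hMx : M x = M y \ M z := hMl
    show mkF M x = mkF M y \ mkF M z
    apply Set.ext
    intro σ
    simp only [mkF, Set.mem_setOf_eq, Set.mem_diff]
    constructor
    · rintro ⟨hx, t, ht⟩
      have h := ZFSet.mem_sdiff.mp (hMx ▸ (ht x).mpr hx)
      exact ⟨⟨(ht y).mp h.1, t, ht⟩, fun hc => h.2 ((ht z).mpr hc.1)⟩
    · rintro ⟨⟨hy, t, ht⟩, hnz⟩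
      have hz : z ∉ σ := fun hc => hnz ⟨hc, t, ht⟩
      refine ⟨(ht x).mp ?_, t, ht⟩
      rw [hMx]
      exact ZFSet.mem_sdiff.mpr ⟨(ht y).mpr hy, fun hc => hz ((ht z).mp hc)⟩
  | ne x y =>
    have hMx : M x ≠ M y := hMl
    show mkF M x ≠ mkF M y
    intro h
    apply hMx
    apply ZFSet.ext
    intro t
    have key : ∀ a b : Fin n, mkF M a = mkF M b → t ∈ M a → t ∈ M b := by
      intro a b hab hta
      have hσ : {w : Fin n | t ∈ M w} ∈ mkF M a := ⟨hta, t, fun w => Iff.rfl⟩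
      rw [hab] at hσ
      exact hσ.1
    exact ⟨key x y h, key y x h.symm⟩

/-- Realize a fulfilling map as a set assignment, sending each nonempty subset of the
variables to a chosen ZFC set via an injection `g` with range inside `U`. -/
private def mkJ {n : ℕ} (F : Fin n → Set (Set (Fin n)))
    (g : {σ : Set (Fin n) // σ.Nonempty} → ZFSet.{u}) (U : ZFSet.{u}) : Fin n → ZFSet.{u} :=
  fun v => ZFSet.sep (fun b => ∃ σ : {σ : Set (Fin n) // σ.Nonempty}, σ.1 ∈ F v ∧ b = g σ) U

private lemma mem_mkJ {n : ℕ} {F : Fin n → Set (Set (Fin n))}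
    {g : {σ : Set (Fin n) // σ.Nonempty} → ZFSet.{u}} {U : ZFSet.{u}}
    (hg : ∀ σ, g σ ∈ U) {v : Fin n} {b : ZFSet.{u}} :
    b ∈ mkJ F g U v ↔ ∃ σ : {σ : Set (Fin n) // σ.Nonempty}, σ.1 ∈ F v ∧ b = g σ := by
  rw [mkJ, ZFSet.mem_sep]
  constructor
  · rintro ⟨-, h⟩; exact h
  · rintro ⟨σ, hσ, rfl⟩; exact ⟨hg σ, σ, hσ, rfl⟩

private lemma mkJ_subset {n : ℕ} (F : Fin n → Set (Set (Fin n)))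
    (g : {σ : Set (Fin n) // σ.Nonempty} → ZFSet.{u}) (U : ZFSet.{u}) (v : Fin n) :
    mkJ F g U v ⊆ U := fun _ hb => (ZFSet.mem_sep.mp hb).1

private lemma mkJ_sat {n : ℕ} {F : Fin n → Set (Set (Fin n))}
    {g : {σ : Set (Fin n) // σ.Nonempty} → ZFSet.{u}} {U : ZFSet.{u}}
    (hg : ∀ σ, g σ ∈ U) (ginj : Function.Injective g)
    (hne : ∀ v σ, σ ∈ F v → σ.Nonempty) {l : BSTLit (Fin n)}
    (hF : BSTLit.FulfilledBy F l) : BSTLit.Sat (mkJ F g U) l := by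
  cases l with
  | eqUnion x y z =>
    have hFx : F x = F y ∪ F z := hF
    show mkJ F g U x = mkJ F g U y ∪ mkJ F g U z
    apply ZFSet.ext
    intro b
    rw [ZFSet.mem_union, mem_mkJ hg, mem_mkJ hg, mem_mkJ hg]
    constructor
    · rintro ⟨σ, hσ, rfl⟩
      rcases (hFx ▸ hσ : σ.1 ∈ F y ∪ F z) with h | h
      · exact Or.inl ⟨σ, h, rfl⟩
      · exact Or.inr ⟨σ, h, rfl⟩
    · rintro (⟨σ, hσ, rfl⟩ | ⟨σ, hσ, rfl⟩)
      · exact ⟨σ, hFx ▸ Set.mem_union_left _ hσ, rfl⟩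
      · exact ⟨σ, hFx ▸ Set.mem_union_right _ hσ, rfl⟩
  | eqDiff x y z =>
    have hFx : F x = F y \ F z := hF
    show mkJ F g U x = mkJ F g U y \ mkJ F g U z
    apply ZFSet.ext
    intro b
    rw [ZFSet.mem_sdiff, mem_mkJ hg, mem_mkJ hg, mem_mkJ hg]
    constructor
    · rintro ⟨σ, hσ, rfl⟩
      have h := (hFx ▸ hσ : σ.1 ∈ F y \ F z)
      refine ⟨⟨σ, h.1, rfl⟩, ?_⟩
      rintro ⟨τ, hτ, hb⟩
      exact h.2 (ginj hb ▸ hτ)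
    · rintro ⟨⟨σ, hσ, rfl⟩, hnz⟩
      refine ⟨σ, hFx ▸ Set.mem_diff_of_mem hσ ?_, rfl⟩
      intro hc
      exact hnz ⟨σ, hc, rfl⟩
  | ne x y =>
    have hFx : F x ≠ F y := hF
    show mkJ F g U x ≠ mkJ F g U y
    intro h
    apply hFx
    apply Set.ext
    intro σ
    have key : ∀ a b : Fin n, mkJ F g U a = mkJ F g U b → σ ∈ F a → σ ∈ F b := by
      intro a b hab hσ
      have hσne : σ.Nonempty := hne a σ hσ
      have hmem : g ⟨σ, hσne⟩ ∈ mkJ F g U a := (mem_mkJ hg).mpr ⟨⟨σ, hσne⟩, hσ, rfl⟩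
      rw [hab] at hmem
      obtain ⟨τ, hτ, hb⟩ := (mem_mkJ hg).mp hmem
      have heq := ginj hb
      rw [← heq] at hτ
      exact hτ
    exact ⟨key x y h, key y x h.symm⟩

/-- Lifting satisfaction from a set of blocks of a partition to its union. -/
private lemma sat_sUnion_of_partition {n : ℕ} {S : ZFSet} (hS : IsPartition S)
    {J : Fin n → ZFSet} (hJS : ∀ v, J v ⊆ S) {l : BSTLit (Fin n)}
    (h : BSTLit.Sat J l) : BSTLit.Sat (fun v => ZFSet.sUnion (J v)) l := by
  cases l with
  | eqUnion x y z =>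
    have hx : J x = J y ∪ J z := h
    show ZFSet.sUnion (J x) = ZFSet.sUnion (J y) ∪ ZFSet.sUnion (J z)
    rw [hx, sUnion_union]
  | eqDiff x y z =>
    have hx : J x = J y \ J z := h
    show ZFSet.sUnion (J x) = ZFSet.sUnion (J y) \ ZFSet.sUnion (J z)
    rw [hx, sUnion_diff_of_partition hS (hJS y) (hJS z)]
  | ne x y =>
    have hx : J x ≠ J y := h
    show ZFSet.sUnion (J x) ≠ ZFSet.sUnion (J y)
    intro hc
    exact hx (sUnion_inj_of_partition hS (hJS x) (hJS y) hc)

/-- a BST-conjunction with `n` distinct variables is satisfiable iff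
it is satisfied by every partition of size `2^n - 1`. -/
theorem stmt5 {n : ℕ} (Φ : List (BSTLit (Fin n))) :
    (∃ M : Fin n → ZFSet, ∀ l ∈ Φ, BSTLit.Sat M l) ↔
      ∀ S : ZFSet, IsPartition S → S.toSet.Finite → S.toSet.ncard = 2 ^ n - 1 →
        ∃ J : Fin n → ZFSet, (∀ v, J v ⊆ S) ∧
          ∀ l ∈ Φ, BSTLit.Sat (fun v => ZFSet.sUnion (J v)) l := by
  classical
  constructor
  · -- forward direction
    rintro ⟨M, hM⟩ S hS hfin hcard
    haveI : Fintype (S.toSet) := hfin.fintype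
    have hcardS : Fintype.card S.toSet = 2 ^ n - 1 := by
      rw [← Nat.card_eq_fintype_card, Nat.card_coe_set_eq, hcard]
    have hcompl : Fintype.card {σ : Set (Fin n) // ¬ σ.Nonempty} = 1 := by
      rw [Fintype.card_eq_one_iff]
      refine ⟨⟨∅, by simp [Set.not_nonempty_iff_eq_empty]⟩, ?_⟩
      rintro ⟨σ, hσ⟩
      simp only [Set.not_nonempty_iff_eq_empty] at hσ
      simp [hσ]
    have hsub : Fintype.card {σ : Set (Fin n) // σ.Nonempty} = 2 ^ n - 1 := by
      have h1 := Fintype.card_subtype_compl (fun σ : Set (Fin n) => σ.Nonempty)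
      rw [hcompl, Fintype.card_set, Fintype.card_fin] at h1
      have h2 : Fintype.card {σ : Set (Fin n) // σ.Nonempty} ≤ 2 ^ n := by
        calc Fintype.card {σ : Set (Fin n) // σ.Nonempty}
            ≤ Fintype.card (Set (Fin n)) := Fintype.card_subtype_le _
          _ = 2 ^ n := by rw [Fintype.card_set, Fintype.card_fin]
      have h3 : 0 < 2 ^ n := Nat.pow_pos (by norm_num)
      omega
    obtain ⟨e⟩ : Nonempty ({σ : Set (Fin n) // σ.Nonempty} ≃ S.toSet) :=
      ⟨Fintype.equivOfCardEq (by rw [hsub, hcardS])⟩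
    set g : {σ : Set (Fin n) // σ.Nonempty} → ZFSet := fun σ => (e σ : ZFSet) with hg
    have ginj : Function.Injective g := by
      intro σ τ h
      exact e.injective (Subtype.coe_injective h)
    have hgS : ∀ σ, g σ ∈ S := fun σ => (e σ).2
    refine ⟨mkJ (mkF M) g S, mkJ_subset _ _ _, ?_⟩
    intro l hl
    exact sat_sUnion_of_partition hS (mkJ_subset _ _ _)
      (mkJ_sat hgS ginj (fun v σ h => mkF_nonempty h) (mkF_fulfills (hM l hl)))
  · -- backward direction
    intro h
    -- build a concrete partition of size 2^n - 1 out of singletons of distinct sets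
    set m := 2 ^ n - 1 with hm
    set f : ℕ → ZFSet := fun k => ({natToZF k} : ZFSet) with hf
    have finj : Function.Injective f := by
      intro a b hab
      apply natToZF_inj
      have h1 : natToZF a ∈ f a := ZFSet.mem_singleton.mpr rfl
      rw [hab] at h1
      exact ZFSet.mem_singleton.mp h1
    set S : ZFSet := listToZF ((List.range m).map f) with hSdef
    have memS : ∀ x, x ∈ S ↔ ∃ k < m, x = f k := by
      intro x
      rw [hSdef, mem_listToZF]
      simp only [List.mem_map, List.mem_range]
      constructor
      · rintro ⟨k, hk, rfl⟩; exact ⟨k, hk, rfl⟩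
      · rintro ⟨k, hk, rfl⟩; exact ⟨k, hk, rfl⟩
    have hSpart : IsPartition S := by
      constructor
      · intro b hb
        obtain ⟨k, -, rfl⟩ := (memS b).mp hb
        intro hc
        exact ZFSet.notMem_empty (natToZF k) (hc ▸ ZFSet.mem_singleton.mpr rfl)
      · intro b hb c hc hbc t htb htc
        obtain ⟨k, -, rfl⟩ := (memS b).mp hb
        obtain ⟨j, -, rfl⟩ := (memS c).mp hc
        have h1 := ZFSet.mem_singleton.mp htb
        have h2 := ZFSet.mem_singleton.mp htc
        exact hbc (congrArg f (natToZF_inj (h1.symm.trans (h1.symm ▸ h2))))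
    have hset : S.toSet = ↑((Finset.range m).image f) := by
      apply Set.ext
      intro x
      rw [show x ∈ S.toSet ↔ x ∈ S from Iff.rfl, memS]
      simp only [Finset.coe_image, Finset.coe_range, Set.mem_image, Set.mem_Iio]
      constructor
      · rintro ⟨k, hk, rfl⟩; exact ⟨k, hk, rfl⟩
      · rintro ⟨k, hk, rfl⟩; exact ⟨k, hk, rfl⟩
    have hfin : S.toSet.Finite := by
      rw [hset]; exact Finset.finite_toSet _
    have hcard : S.toSet.ncard = 2 ^ n - 1 := by
      rw [hset, Set.ncard_coe_finset,
        Finset.card_image_of_injective _ finj, Finset.card_range]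
    obtain ⟨J, hJS, hJ⟩ := h S hSpart hfin hcard
    -- extract the universe-free fulfilling map and re-realize it in any universe
    set M₂ : Fin n → ZFSet := fun v => ZFSet.sUnion (J v) with hM₂
    set F : Fin n → Set (Set (Fin n)) := mkF M₂ with hFdef
    -- an injection from nonempty subsets of variables into ZFSet (target universe)
    set enc : {σ : Set (Fin n) // σ.Nonempty} → ℕ :=
      fun σ => ((Fintype.equivFin {σ : Set (Fin n) // σ.Nonempty}) σ : ℕ) with henc
    have encinj : Function.Injective enc := by
      intro σ τ hστ
      exact (Fintype.equivFin _).injective (Fin.val_injective hστ)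
    set g : {σ : Set (Fin n) // σ.Nonempty} → ZFSet := fun σ => natToZF (enc σ) with hgdef
    have ginj : Function.Injective g := fun σ τ hστ => encinj (natToZF_inj hστ)
    set U : ZFSet :=
      listToZF (((Finset.univ : Finset {σ : Set (Fin n) // σ.Nonempty}).toList).map g)
      with hU
    have hgU : ∀ σ, g σ ∈ U := by
      intro σ
      rw [hU, mem_listToZF]
      exact List.mem_map.mpr ⟨σ, Finset.mem_toList.mpr (Finset.mem_univ σ), rfl⟩
    refine ⟨mkJ F g U, ?_⟩
    intro l hl
    exact mkJ_sat hgU ginj (fun v σ hσ => mkF_nonempty hσ)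
      (mkF_fulfills (hJ l hl))

end BSTO
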